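/- In the symmetric MPE of the K-consecutive-win contest, the winning-value ratios satisfy: for 0 ≤ i ≤ K−2, Δ̂(i+1)/Δ̂(−i−1) = [(1 − π̂(−i−1))/π̂(i+1)] · Δ̂(i)/Δ̂(−i). -/

import Mathlib

/-- self-reinforcement in the K-consecutive-win contest:
for 0 ≤ i ≤ K−2, Δ̂(i+1)/Δ̂(−i−1) = [(1 − π̂(−i−1))/π̂(i+1)]·Δ̂(i)/Δ̂(−i). -/
theorem stmt_14 (K : ℤ) (v : ℝ) (V π Δ : ℤ → ℝ) (hK : 2 ≤ K) (hv : 0 < v)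
    (hVK : V K = v) (hVmK : V (-K) = 0)
    (hπ : ∀ i, -(K-1) ≤ i → i ≤ K-1 → π i ∈ Set.Ioo (0:ℝ) 1)
    (hΔpos : ∀ i, 0 ≤ i → i ≤ K-1 → Δ i = V (i+1) - V (-1))
    (hΔneg : ∀ i, -(K-1) ≤ i → i < 0 → Δ i = V 1 - V (i-1))
    (hrecpos : ∀ i, 0 ≤ i → i ≤ K-1 → V i = V (-1) + π i * Δ i)
    (hrecneg : ∀ i, -(K-1) ≤ i → i < 0 → V i = V (i-1) + π i * Δ i)
    (hmono : ∀ i j, -K ≤ i → i < j → j ≤ K → V i < V j) :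
    ∀ i, 0 ≤ i → i ≤ K-2 →
      Δ (i+1) / Δ (-i-1) = ((1 - π (-i-1)) / π (i+1)) * (Δ i / Δ (-i)) := by
  intro i hi0 hiK
  obtain ⟨hπ1pos, hπ1lt⟩ := hπ (i+1) (by linarith) (by linarith)
  obtain ⟨hπ2pos, hπ2lt⟩ := hπ (-i-1) (by linarith) (by linarith)
  -- Δ i = π(i+1) * Δ(i+1)
  have hΔi : Δ i = V (i+1) - V (-1) := hΔpos i hi0 (by linarith)
  have hrec1 : V (i+1) = V (-1) + π (i+1) * Δ (i+1) := hrecpos (i+1) (by linarith) (by linarith)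
  have e1 : Δ i = π (i+1) * Δ (i+1) := by rw [hΔi, hrec1]; ring
  -- Δ(-i-1) = V 1 - V(-i-2)
  have hΔm1 : Δ (-i-1) = V 1 - V (-i-1-1) := hΔneg (-i-1) (by linarith) (by linarith)
  have hrec2 : V (-i-1) = V (-i-1-1) + π (-i-1) * Δ (-i-1) :=
    hrecneg (-i-1) (by linarith) (by linarith)
  -- Δ(-i) = V 1 - V(-i-1)
  have hΔm0 : Δ (-i) = V 1 - V (-i-1) := by
    rcases eq_or_lt_of_le hi0 with h | h
    · subst h
      have := hΔpos 0 le_rfl (by linarith)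
      norm_num at this ⊢
      rw [this]
    · have := hΔneg (-i) (by linarith) (by linarith)
      rw [this]
  have e2 : Δ (-i) = (1 - π (-i-1)) * Δ (-i-1) := by
    rw [hΔm0, hrec2, hΔm1]; ring
  -- positivity
  have hd1 : 0 < Δ (-i-1) := by
    rw [hΔm1]
    have := hmono (-i-1-1) 1 (by linarith) (by linarith) (by linarith)
    linarith
  have hd0 : 0 < Δ (-i) := by
    rw [e2]; exact mul_pos (by linarith) hd1
  have h1π : (0:ℝ) < 1 - π (-i-1) := by linarith
  rw [e1, e2]
  field_simp
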